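/- For every n ≥ 0, letting L_2(n) = Σ_{k=0}^n 2(-q^{n+1})^k/(1+q^k) · H_k(q)/H_n(q), one has L_2(n+1) - L_2(n) = 2(-q)^{(n+1)^2} as rational functions in q. -/

import Mathlib

open Finset

/-- The formal variable q as a rational function. -/
noncomputable def q : RatFunc ℚ := RatFunc.X

/-- H n q = prod_{j=1}^n (1+q^j)/(1-q^j). -/
noncomputable def H (n : ℕ) : RatFunc ℚ := ∏ j ∈ Finset.Icc 1 n, (1 + q ^ j) / (1 - q ^ j)

/-- The left-hand side of identity (b). -/
noncomputable def L2 (n : ℕ) : RatFunc ℚ :=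
  ∑ k ∈ Finset.range (n + 1), 2 * (-q ^ (n + 1)) ^ k / (1 + q ^ k) * (H k / H n)

lemma one_add_q_pow_ne (k : ℕ) : (1 : RatFunc ℚ) + q ^ k ≠ 0 := by
  have h : (1 + Polynomial.X ^ k : Polynomial ℚ) ≠ 0 := by
    intro h
    have := congrArg (fun p => Polynomial.coeff p 0) h
    rcases k with _ | k <;> simp [Polynomial.coeff_X_pow] at this
  have := RatFunc.algebraMap_ne_zero h
  simpa [q, RatFunc.algebraMap_X, map_add, map_pow, map_one] using this

lemma one_sub_q_pow_ne (k : ℕ) (hk : k ≠ 0) : (1 : RatFunc ℚ) - q ^ k ≠ 0 := by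
  have h : (1 - Polynomial.X ^ k : Polynomial ℚ) ≠ 0 := by
    intro h
    have := congrArg (fun p => Polynomial.coeff p 0) h
    rcases k with _ | k
    · exact hk rfl
    · simp [Polynomial.coeff_X_pow] at this
  have := RatFunc.algebraMap_ne_zero h
  simpa [q, RatFunc.algebraMap_X, map_sub, map_pow, map_one] using this

lemma H_ne (n : ℕ) : H n ≠ 0 := by
  unfold H
  refine Finset.prod_ne_zero_iff.mpr fun j hj => ?_
  have hj1 : j ≠ 0 := by
    have := (Finset.mem_Icc.mp hj).1; omega
  exact div_ne_zero (one_add_q_pow_ne j) (one_sub_q_pow_ne j hj1)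

lemma H_succ (n : ℕ) : H (n + 1) = H n * ((1 + q ^ (n + 1)) / (1 - q ^ (n + 1))) := by
  unfold H
  rw [← Finset.prod_Icc_succ_top (by omega : 1 ≤ n + 1)]

/-- The WZ summand. -/
noncomputable def F (n k : ℕ) : RatFunc ℚ :=
  2 * (-q ^ (n + 1)) ^ k / (1 + q ^ k) * (H k / H n)

/-- The WZ certificate. -/
noncomputable def G (n k : ℕ) : RatFunc ℚ :=
  F n k * (1 - q ^ k) / (1 + q ^ (n + 1))

lemma wz_core (x y r A C B : RatFunc ℚ) (h1 : 1 + x ≠ 0) (h2 : 1 + x * r ≠ 0)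
    (h3 : 1 - x * r ≠ 0) (h4 : 1 + y ≠ 0) (h5 : 1 - y ≠ 0) (h6 : C ≠ 0) (h7 : A ≠ 0) :
    2 * (B * x) / (1 + x) * (A / (C * ((1 + y) / (1 - y)))) - 2 * B / (1 + x) * (A / C) =
      2 * (B * -y) / (1 + x * r) * (A * ((1 + x * r) / (1 - x * r)) / C) * (1 - x * r) / (1 + y)
        - 2 * B / (1 + x) * (A / C) * (1 - x) / (1 + y) := by
  have e1 : A / (C * ((1 + y) / (1 - y))) = A * (1 - y) / (C * (1 + y)) := by
    rw [mul_div_assoc', div_div_eq_mul_div]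
  have e2 : 2 * (B * -y) / (1 + x * r) * (A * ((1 + x * r) / (1 - x * r)) / C) * (1 - x * r)
      = 2 * (B * -y) * A / C := by
    field_simp
  rw [e1, e2]
  field_simp
  ring

lemma wz_step (n k : ℕ) : F (n + 1) k - F n k = G n (k + 1) - G n k := by
  unfold G F
  rw [H_succ n, H_succ k]
  have e1 : (-q ^ (n + 1 + 1)) ^ k = (-q ^ (n + 1)) ^ k * q ^ k := by
    rw [← mul_pow]; ring_nf
  have e2 : (-q ^ (n + 1)) ^ (k + 1) = (-q ^ (n + 1)) ^ k * -q ^ (n + 1) := by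
    rw [pow_succ]
  have e3 : q ^ (k + 1) = q ^ k * q := pow_succ _ _
  rw [e1, e2, e3]
  exact wz_core (q ^ k) (q ^ (n + 1)) q (H k) (H n) ((-q ^ (n + 1)) ^ k)
    (one_add_q_pow_ne k)
    (by have := one_add_q_pow_ne (k + 1); rwa [pow_succ] at this)
    (by have := one_sub_q_pow_ne (k + 1) (by omega); rwa [pow_succ] at this)
    (one_add_q_pow_ne (n + 1)) (one_sub_q_pow_ne (n + 1) (by omega))
    (H_ne n) (H_ne k)

theorem L2_difference (n : ℕ) : L2 (n + 1) - L2 n = 2 * (-q) ^ ((n + 1) ^ 2) := by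
  have hL : ∀ m, L2 m = ∑ k ∈ Finset.range (m + 1), F m k := fun m => rfl
  have h4 : (1 : RatFunc ℚ) + q ^ (n + 1) ≠ 0 := one_add_q_pow_ne (n + 1)
  have h5 : (1 : RatFunc ℚ) - q ^ (n + 1) ≠ 0 := one_sub_q_pow_ne (n + 1) (by omega)
  have h6 : H n ≠ 0 := H_ne n
  have htel : ∑ k ∈ Finset.range (n + 1), F (n + 1) k - ∑ k ∈ Finset.range (n + 1), F n k
      = G n (n + 1) - G n 0 := by
    rw [← Finset.sum_sub_distrib, Finset.sum_congr rfl fun k _ => wz_step n k]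
    exact Finset.sum_range_sub (G n) (n + 1)
  have hG0 : G n 0 = 0 := by simp [G]
  rw [hG0, sub_zero] at htel
  have key : L2 (n + 1) - L2 n = F (n + 1) (n + 1) + G n (n + 1) := by
    rw [hL, hL, Finset.sum_range_succ (F (n + 1)) (n + 1)]
    linear_combination htel
  rw [key]
  have hFF : F (n + 1) (n + 1) = 2 * (-1 : RatFunc ℚ) ^ (n + 1) * q ^ ((n + 1) ^ 2) * q ^ (n + 1)
      / (1 + q ^ (n + 1)) := by
    unfold F
    rw [div_self (H_ne (n + 1)), mul_one, neg_pow, ← pow_mul,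
      show (n + 1 + 1) * (n + 1) = (n + 1) ^ 2 + (n + 1) from by ring, pow_add]
    ring
  have hGG : G n (n + 1) = 2 * (-1 : RatFunc ℚ) ^ (n + 1) * q ^ ((n + 1) ^ 2)
      / (1 + q ^ (n + 1)) := by
    unfold G F
    rw [H_succ n, neg_pow, ← pow_mul, show (n + 1) * (n + 1) = (n + 1) ^ 2 from by ring]
    generalize q ^ ((n + 1) ^ 2) = P
    generalize q ^ (n + 1) = y at h4 h5 ⊢
    generalize H n = C at h6 ⊢
    field_simp
  rw [hFF, hGG]
  have hsign : (-q) ^ ((n + 1) ^ 2) = (-1 : RatFunc ℚ) ^ (n + 1) * q ^ ((n + 1) ^ 2) := by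
    rw [neg_pow]
    congr 1
    rcases Nat.even_or_odd (n + 1) with h | h
    · rw [h.neg_one_pow, (Nat.even_pow.mpr ⟨h, by norm_num⟩).neg_one_pow]
    · rw [h.neg_one_pow, (h.pow).neg_one_pow]
  rw [hsign]
  generalize q ^ ((n + 1) ^ 2) = P
  generalize q ^ (n + 1) = y at h4 ⊢
  field_simp
  ring
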